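/- Let S > 0, T = 1. The characteristic polynomial of the Jacobian of the plant–soil system at the symmetric coexistence equilibrium Ē₃ = (S/(K+S+1), S/(K+S+1), 1/(K+S+1), 1/(K+S+1)) is λ⁴ + A₁λ³ + A₂λ² + A₃λ + A₄ with A₁ = 2S, A₂ = S[(2K+S+2)/(K+S+1)² + S], A₃ = 2S²/(K+S+1)², A₄ = S²(1-K-S)/(1+K+S). -/

import Mathlib

open Polynomial Matrix

set_option maxHeartbeats 1000000 in
lemma det_fin_four' {R : Type*} [CommRing R] (A : Matrix (Fin 4) (Fin 4) R) :
    A.det =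
      A 0 0 * (A 1 1 * (A 2 2 * A 3 3 - A 2 3 * A 3 2)
             - A 1 2 * (A 2 1 * A 3 3 - A 2 3 * A 3 1)
             + A 1 3 * (A 2 1 * A 3 2 - A 2 2 * A 3 1))
    - A 0 1 * (A 1 0 * (A 2 2 * A 3 3 - A 2 3 * A 3 2)
             - A 1 2 * (A 2 0 * A 3 3 - A 2 3 * A 3 0)
             + A 1 3 * (A 2 0 * A 3 2 - A 2 2 * A 3 0))
    + A 0 2 * (A 1 0 * (A 2 1 * A 3 3 - A 2 3 * A 3 1)
             - A 1 1 * (A 2 0 * A 3 3 - A 2 3 * A 3 0)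
             + A 1 3 * (A 2 0 * A 3 1 - A 2 1 * A 3 0))
    - A 0 3 * (A 1 0 * (A 2 1 * A 3 2 - A 2 2 * A 3 1)
             - A 1 1 * (A 2 0 * A 3 2 - A 2 2 * A 3 0)
             + A 1 2 * (A 2 0 * A 3 1 - A 2 1 * A 3 0)) := by
  simp [Matrix.det_succ_row_zero, Fin.sum_univ_succ, Fin.succAbove, Matrix.submatrix_apply,
    show (Fin.succ 2 : Fin 4) = 3 from rfl, show (Fin.castSucc 2 : Fin 4) = 2 from rfl,
    show ((1:Fin 4) < 3) from by decide]
  ring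

/-- Jacobian of the plant-soil model with T = 1 evaluated at the symmetric
coexistence equilibrium Ē₃ = (S/(K+S+1), S/(K+S+1), 1/(K+S+1), 1/(K+S+1)). -/
noncomputable def JE3 (K S : ℝ) : Matrix (Fin 4) (Fin 4) ℝ :=
  let b := S / (K + S + 1)
  let t := 1 / (K + S + 1)
  !![1 - b - t - K * t, -b, -b, -K * b;
     -b, 1 - b - K * t - t, -K * b, -b;
     1, 0, -S, 0;
     0, 1, 0, -S]

theorem charpoly_at_symmetric_equilibrium (K S : ℝ) (hS : 0 < S) (h : K + S + 1 ≠ 0) :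
    (JE3 K S).charpoly =
      X ^ 4 + C (2 * S) * X ^ 3
        + C (S * ((2 * K + S + 2) / (K + S + 1) ^ 2 + S)) * X ^ 2
        + C (2 * S ^ 2 / (K + S + 1) ^ 2) * X
        + C (S ^ 2 * (1 - K - S) / (1 + K + S)) := by
  have h1 : (1:ℝ) + K + S ≠ 0 := fun hc => h (by linarith [hc])
  set t : ℝ := 1 / (K + S + 1) with htdef
  have ht : t * (K + S + 1) = 1 := by rw [htdef]; field_simp
  have hb : S / (K + S + 1) = S * t := by rw [htdef]; ring
  have hinv : (K + S + 1)⁻¹ = t := by rw [htdef, one_div]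
  have h2 : S * ((2 * K + S + 2) / (K + S + 1) ^ 2 + S) = S * ((2 * K + S + 2) * t ^ 2 + S) := by
    rw [htdef]; field_simp
  have h3 : 2 * S ^ 2 / (K + S + 1) ^ 2 = 2 * S ^ 2 * t ^ 2 := by
    rw [htdef]; field_simp
  have h4 : S ^ 2 * (1 - K - S) / (1 + K + S) = S ^ 2 * (2 * t - 1) := by
    rw [htdef]; field_simp; ring
  rw [h2, h3, h4, Matrix.charpoly, det_fin_four']
  simp only [charmatrix_apply, JE3, Matrix.diagonal_apply, Matrix.map_apply, Matrix.of_apply,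
    Matrix.cons_val', Matrix.cons_val_zero, Matrix.cons_val_one, Matrix.head_cons,
    Matrix.empty_val', Matrix.cons_val_fin_one, Matrix.head_fin_const, Matrix.cons_val]
  norm_num [Fin.ext_iff, show ((3:Fin 4).val) = 3 from rfl, show ((2:Fin 4).val) = 2 from rfl, show ((1:Fin 4).val) = 1 from rfl, show ((0:Fin 4).val) = 0 from rfl]
  rw [hb, hinv]
  have htC : (C t) * (C K + C S + 1) = 1 := by
    rw [← C_1, ← C_add, ← C_add, ← C_mul, ht]
  simp only [C_mul, C_add, C_sub, C_pow, C_1, map_ofNat]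
  linear_combination ((-1)*X^2 + (2)*X^3 + (C t)*X^2 + (-2)*(C S)*X + (4)*(C S)*X^2
    + (4)*(C S)*(C t)*X + (-1)*(C S)*(C t)*X^2 + (-2)*(C S)^2 + (2)*(C S)^2*X
    + (4)*(C S)^2*(C t) + (C K)*(C t)*X^2 + (2)*(C K)*(C S)*(C t)*X) * htC
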